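/- Let m ≥ 1 and r be integers with gcd(m, r) = 1. Then gcd(2^m + 1, 2^r + 1) is equal to either 1 or 3. -/

import Mathlib

theorem gcd_two_pow_add_one_eq_one_or_three (m r : ℕ) (hm : 1 ≤ m)
    (h : Nat.gcd m r = 1) :
    Nat.gcd (2 ^ m + 1) (2 ^ r + 1) = 1 ∨ Nat.gcd (2 ^ m + 1) (2 ^ r + 1) = 3 := by
  set d := Nat.gcd (2 ^ m + 1) (2 ^ r + 1) with hd
  have h1 : d ∣ 2 ^ m + 1 := Nat.gcd_dvd_left _ _
  have h2 : d ∣ 2 ^ r + 1 := Nat.gcd_dvd_right _ _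
  have e1 : ((2 : ZMod d)) ^ m = -1 := by
    have := (ZMod.natCast_eq_zero_iff _ _).2 h1
    push_cast at this
    linear_combination this
  have e2 : ((2 : ZMod d)) ^ r = -1 := by
    have := (ZMod.natCast_eq_zero_iff _ _).2 h2
    push_cast at this
    linear_combination this
  have f1 : ((2 : ZMod d)) ^ (m * 2) = 1 := by
    rw [pow_mul, e1]; ring
  have f2 : ((2 : ZMod d)) ^ (r * 2) = 1 := by
    rw [pow_mul, e2]; ring
  have := pow_gcd_eq_one.2 ⟨f1, f2⟩
  rw [Nat.gcd_mul_right, h, one_mul] at this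
  have h3 : (3 : ZMod d) = 0 := by linear_combination this
  have hdvd : d ∣ 3 := by
    have := (ZMod.natCast_eq_zero_iff 3 d).1 (by exact_mod_cast h3)
    exact this
  exact (Nat.prime_three).eq_one_or_self_of_dvd d hdvd
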